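/- Let λ, μ, A, B be real numbers and ξ¹, ξ² ∈ ℝ³, set ξ^P = ξ¹ + ξ², and let H(p¹, p²) be the S–S interaction symbol scalar. Suppose p¹ ∈ ℝ³ lies in the plane spanned by ξ¹ and ξ² (with p¹·ξ¹ = 0), and p² ∈ ℝ³ satisfies p²·ξ¹ = 0 and p²·ξ² = 0 (i.e., p² is perpendicular to the interaction plane). Then H(p¹, p²) = 0 and H(p², p¹) = 0. (The interaction of an in-plane polarized S wave with an S wave polarized perpendicular to the interaction plane produces no P wave: the mixed SH–SV symbol vanishes.) -/
import Mathlib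


/-- Euclidean dot product on ℝ³. -/
def dot (x y : Fin 3 → ℝ) : ℝ := ∑ i, x i * y i

/-- The S–S interaction symbol scalar H(p¹, p²) for two S waves with covectors
ξ¹, ξ² and polarizations p¹, p². -/
noncomputable def HSS (lam mu A B : ℝ) (ξ1 ξ2 p1 p2 : Fin 3 → ℝ) : ℝ :=
  lam * dot p1 p2 * dot ξ1 ξ2 * dot (ξ1 + ξ2) (ξ1 + ξ2)
    + mu * (dot p1 (ξ1 + ξ2) * dot ξ1 ξ2 + dot ξ1 (ξ1 + ξ2) * dot p1 ξ2)
        * dot p2 (ξ1 + ξ2)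
    + mu * dot p1 p2 * dot ξ1 (ξ1 + ξ2) * dot ξ2 (ξ1 + ξ2)
    + mu * (dot p2 (ξ1 + ξ2) * dot ξ2 ξ1 + dot ξ2 (ξ1 + ξ2) * dot p2 ξ1)
        * dot p1 (ξ1 + ξ2)
    + mu * dot p1 p2 * dot ξ2 (ξ1 + ξ2) * dot ξ1 (ξ1 + ξ2)
    + (A / 2) * (dot p1 (ξ1 + ξ2) * dot p2 (ξ1 + ξ2) * dot ξ1 ξ2
      + dot p1 (ξ1 + ξ2) * dot ξ2 (ξ1 + ξ2) * dot ξ1 p2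
      + dot ξ1 (ξ1 + ξ2) * dot p2 (ξ1 + ξ2) * dot p1 ξ2
      + dot ξ1 (ξ1 + ξ2) * dot ξ2 (ξ1 + ξ2) * dot p1 p2)
    + B * (dot p1 p2 * dot ξ1 ξ2 + dot p1 ξ2 * dot ξ1 p2)
        * dot (ξ1 + ξ2) (ξ1 + ξ2)


lemma dot_comm (x y : Fin 3 → ℝ) : dot x y = dot y x := by
  unfold dot; apply Finset.sum_congr rfl; intros; ring

lemma dot_add_right (x y z : Fin 3 → ℝ) : dot x (y + z) = dot x y + dot x z := by
  unfold dot; rw [← Finset.sum_add_distrib]; apply Finset.sum_congr rfl; intros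
  simp [Pi.add_apply]; ring

lemma dot_add_left (x y z : Fin 3 → ℝ) : dot (x + y) z = dot x z + dot y z := by
  rw [dot_comm, dot_add_right, dot_comm z x, dot_comm z y]

lemma dot_smul_left (a : ℝ) (x y : Fin 3 → ℝ) : dot (a • x) y = a * dot x y := by
  unfold dot; rw [Finset.mul_sum]; apply Finset.sum_congr rfl; intros
  simp [Pi.smul_apply]; ring

/-- The interaction of an in-plane polarized S wave with an S wave polarized
perpendicular to the interaction plane produces no P wave: the mixed SH–SV
symbol vanishes. -/
theorem ss_interaction_HV_vanishes (lam mu A B : ℝ) (ξ1 ξ2 p1 p2 : Fin 3 → ℝ)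
    (hp1span : p1 ∈ Submodule.span ℝ ({ξ1, ξ2} : Set (Fin 3 → ℝ)))
    (hp11 : dot p1 ξ1 = 0)
    (hp21 : dot p2 ξ1 = 0) (hp22 : dot p2 ξ2 = 0) :
    HSS lam mu A B ξ1 ξ2 p1 p2 = 0 ∧ HSS lam mu A B ξ1 ξ2 p2 p1 = 0 := by

  obtain ⟨a, b, hab⟩ := Submodule.mem_span_pair.mp hp1span
  have h12 : dot p1 p2 = 0 := by
    rw [← hab, dot_add_left, dot_smul_left, dot_smul_left,
      dot_comm ξ1 p2, dot_comm ξ2 p2, hp21, hp22]; ring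
  have h2P : dot p2 (ξ1 + ξ2) = 0 := by rw [dot_add_right, hp21, hp22]; ring
  have h1p2 : dot ξ1 p2 = 0 := by rw [dot_comm]; exact hp21
  have h2p2 : dot ξ2 p2 = 0 := by rw [dot_comm]; exact hp22
  have h21 : dot p2 p1 = 0 := by rw [dot_comm]; exact h12
  constructor <;>
  · unfold HSS
    simp only [h12, h2P, hp21, h1p2, h21, h2p2, hp22]
    ring
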